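/- (Quantitative fourth moment theorem for infinitely divisible laws) Let μ be an infinitely divisible (with respect to classical convolution) probability measure on ℝ with mean 0, variance 1, and finite fourth moment m₄. Then d_Kol(μ, Φ) ≤ C·√(m₄ - 3), where C is the Berry–Esseen constant and Φ is the standard normal distribution function. -/

import Mathlib

open MeasureTheory ProbabilityTheory

/-- `N`-fold classical convolution power of a measure on `ℝ`
(with the convention that the 0-th power is `δ₀`). -/
noncomputable def convNPow (ν : Measure ℝ) : ℕ → Measure ℝ
  | 0 => Measure.dirac 0
  | n + 1 => Measure.conv (convNPow ν n) ν

instance convNPow_prob (ν : Measure ℝ) [IsProbabilityMeasure ν] (n : ℕ) :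
    IsProbabilityMeasure (convNPow ν n) := by
  induction n with
  | zero => exact Measure.dirac.isProbabilityMeasure
  | succ n ih => exact Measure.probabilitymeasure_of_probabilitymeasures_conv _ _

lemma integrable_dirac0 {f : ℝ → ℝ} (hf : Measurable f) :
    Integrable f (Measure.dirac (0:ℝ)) := by
  constructor
  · exact hf.aestronglyMeasurable
  · rw [HasFiniteIntegral, lintegral_dirac]
    exact ENNReal.coe_lt_top

section aux
variable {P ν : Measure ℝ}

lemma integrable_conv_iff [SFinite P] [SFinite ν] {f : ℝ → ℝ} (hf : Measurable f) :
    Integrable f (P.conv ν) ↔ Integrable (fun p : ℝ × ℝ => f (p.1 + p.2)) (P.prod ν) := by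
  rw [Measure.conv, integrable_map_measure hf.aestronglyMeasurable (by fun_prop)]
  rfl

lemma integral_conv [SFinite P] [SFinite ν] {f : ℝ → ℝ} (hf : Measurable f) :
    ∫ x, f x ∂(P.conv ν) = ∫ p : ℝ × ℝ, f (p.1 + p.2) ∂(P.prod ν) := by
  rw [Measure.conv, integral_map (by fun_prop) hf.aestronglyMeasurable]

end aux

section pows
variable {ν : Measure ℝ}

lemma abs_pow_le_one_add_pow_four (x : ℝ) {k : ℕ} (hk : k ≤ 4) : |x| ^ k ≤ 1 + x ^ 4 := by
  have hx : (0:ℝ) ≤ |x| := abs_nonneg x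
  have h4 : |x| ^ 4 = x ^ 4 := by
    rw [← abs_pow]; exact abs_of_nonneg (by positivity)
  rcases le_total |x| 1 with h | h
  · have : |x| ^ k ≤ 1 := pow_le_one₀ hx h
    nlinarith [pow_nonneg (by positivity : (0:ℝ) ≤ x^4) 1]
  · have : |x| ^ k ≤ |x| ^ 4 := pow_le_pow_right₀ h hk
    nlinarith

lemma integrable_abs_pow [IsFiniteMeasure ν] (h4 : Integrable (fun x => x ^ 4) ν)
    {k : ℕ} (hk : k ≤ 4) : Integrable (fun x : ℝ => |x| ^ k) ν := by
  refine ((integrable_const (1:ℝ)).add h4).mono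
    ((measurable_abs.pow_const k).aestronglyMeasurable) (ae_of_all _ fun x => ?_)
  have h1 : (0:ℝ) ≤ 1 + x ^ 4 := by positivity
  simp only [Real.norm_eq_abs, abs_pow, abs_abs, Pi.add_apply]
  rw [abs_of_nonneg h1]
  exact abs_pow_le_one_add_pow_four x hk

lemma integrable_pow_of_four [IsFiniteMeasure ν] (h4 : Integrable (fun x => x ^ 4) ν)
    {k : ℕ} (hk : k ≤ 4) : Integrable (fun x : ℝ => x ^ k) ν := by
  refine (integrable_abs_pow h4 hk).mono (by fun_prop) (ae_of_all _ fun x => ?_)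
  simp [abs_pow]

end pows

section convmom
variable {P ν : Measure ℝ} [IsProbabilityMeasure P] [IsProbabilityMeasure ν]

lemma conv_m1 (hP : Integrable (fun x => x ^ 4) P) (hν : Integrable (fun x => x ^ 4) ν) :
    Integrable (fun x : ℝ => x) (P.conv ν) ∧
      ∫ x, x ∂(P.conv ν) = (∫ x, x ∂P) + ∫ x, x ∂ν := by
  have hP1 : Integrable (fun x : ℝ => x) P := by
    simpa using integrable_pow_of_four hP (k := 1) (by norm_num)
  have hν1 : Integrable (fun x : ℝ => x) ν := by
    simpa using integrable_pow_of_four hν (k := 1) (by norm_num)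
  have e : (fun p : ℝ × ℝ => p.1 + p.2) =
      (fun p : ℝ × ℝ => p.1 * 1 + 1 * p.2) := by funext p; ring
  have i1 : Integrable (fun p : ℝ × ℝ => p.1 * 1) (P.prod ν) :=
    hP1.mul_prod (integrable_const 1)
  have i2 : Integrable (fun p : ℝ × ℝ => 1 * p.2) (P.prod ν) :=
    (integrable_const 1).mul_prod hν1
  have A1 : ∫ p : ℝ × ℝ, p.1 * 1 ∂(P.prod ν) = (∫ x, x ∂P) * ∫ _x : ℝ, (1:ℝ) ∂ν :=
    integral_prod_mul (fun x : ℝ => x) (fun _ : ℝ => (1:ℝ))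
  have A2 : ∫ p : ℝ × ℝ, 1 * p.2 ∂(P.prod ν) = (∫ _x : ℝ, (1:ℝ) ∂P) * ∫ x, x ∂ν :=
    integral_prod_mul (fun _ : ℝ => (1:ℝ)) (fun x : ℝ => x)
  have S : ∫ p : ℝ × ℝ, (p.1 * 1 + 1 * p.2) ∂(P.prod ν) =
      (∫ p : ℝ × ℝ, p.1 * 1 ∂(P.prod ν)) + ∫ p : ℝ × ℝ, 1 * p.2 ∂(P.prod ν) :=
    integral_add i1 i2
  constructor
  · rw [_root_.integrable_conv_iff (by fun_prop)]
    exact e ▸ (i1.add i2)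
  · rw [_root_.integral_conv (by fun_prop), show (fun p : ℝ × ℝ => p.1 + p.2) = _ from e,
      S, A1, A2]
    simp

lemma conv_m2 (hP : Integrable (fun x => x ^ 4) P) (hν : Integrable (fun x => x ^ 4) ν) :
    Integrable (fun x : ℝ => x ^ 2) (P.conv ν) ∧
      ∫ x, x ^ 2 ∂(P.conv ν) =
        (∫ x, x ^ 2 ∂P) + 2 * (∫ x, x ∂P) * (∫ x, x ∂ν) + ∫ x, x ^ 2 ∂ν := by
  have hP1 : Integrable (fun x : ℝ => x) P := by
    simpa using integrable_pow_of_four hP (k := 1) (by norm_num)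
  have hν1 : Integrable (fun x : ℝ => x) ν := by
    simpa using integrable_pow_of_four hν (k := 1) (by norm_num)
  have hP2 : Integrable (fun x : ℝ => x ^ 2) P := integrable_pow_of_four hP (by norm_num)
  have hν2 : Integrable (fun x : ℝ => x ^ 2) ν := integrable_pow_of_four hν (by norm_num)
  have e : (fun p : ℝ × ℝ => (p.1 + p.2) ^ 2) =
      (fun p : ℝ × ℝ => p.1 ^ 2 * 1 + (2 * p.1) * p.2 + 1 * p.2 ^ 2) := by funext p; ring
  have i1 : Integrable (fun p : ℝ × ℝ => p.1 ^ 2 * 1) (P.prod ν) :=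
    hP2.mul_prod (integrable_const 1)
  have i2 : Integrable (fun p : ℝ × ℝ => (2 * p.1) * p.2) (P.prod ν) :=
    (hP1.const_mul 2).mul_prod hν1
  have i3 : Integrable (fun p : ℝ × ℝ => 1 * p.2 ^ 2) (P.prod ν) :=
    (integrable_const 1).mul_prod hν2
  have A1 : ∫ p : ℝ × ℝ, p.1 ^ 2 * 1 ∂(P.prod ν) = (∫ x, x ^ 2 ∂P) * ∫ _x : ℝ, (1:ℝ) ∂ν :=
    integral_prod_mul (fun x : ℝ => x ^ 2) (fun _ : ℝ => (1:ℝ))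
  have A2 : ∫ p : ℝ × ℝ, (2 * p.1) * p.2 ∂(P.prod ν) =
      (∫ x : ℝ, 2 * x ∂P) * ∫ x, x ∂ν := integral_prod_mul (fun x : ℝ => 2 * x) (fun x : ℝ => x)
  have A3 : ∫ p : ℝ × ℝ, 1 * p.2 ^ 2 ∂(P.prod ν) = (∫ _x : ℝ, (1:ℝ) ∂P) * ∫ x, x ^ 2 ∂ν :=
    integral_prod_mul (fun _ : ℝ => (1:ℝ)) (fun x : ℝ => x ^ 2)
  have S2 : ∫ p : ℝ × ℝ, (p.1 ^ 2 * 1 + (2 * p.1) * p.2 + 1 * p.2 ^ 2) ∂(P.prod ν) =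
      (∫ p : ℝ × ℝ, (p.1 ^ 2 * 1 + (2 * p.1) * p.2) ∂(P.prod ν))
        + ∫ p : ℝ × ℝ, 1 * p.2 ^ 2 ∂(P.prod ν) := integral_add (i1.add i2) i3
  have S1 : ∫ p : ℝ × ℝ, (p.1 ^ 2 * 1 + (2 * p.1) * p.2) ∂(P.prod ν) =
      (∫ p : ℝ × ℝ, p.1 ^ 2 * 1 ∂(P.prod ν)) + ∫ p : ℝ × ℝ, (2 * p.1) * p.2 ∂(P.prod ν) :=
    integral_add i1 i2
  constructor
  · rw [_root_.integrable_conv_iff (by fun_prop)]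
    exact e ▸ ((i1.add i2).add i3)
  · rw [_root_.integral_conv (by fun_prop), show (fun p : ℝ × ℝ => (p.1 + p.2) ^ 2) = _ from e,
      S2, S1, A1, A2, A3, integral_const_mul]
    simp

lemma conv_m4 (hP : Integrable (fun x => x ^ 4) P) (hν : Integrable (fun x => x ^ 4) ν) :
    Integrable (fun x : ℝ => x ^ 4) (P.conv ν) ∧
      ∫ x, x ^ 4 ∂(P.conv ν) =
        (∫ x, x ^ 4 ∂P) + 4 * (∫ x, x ^ 3 ∂P) * (∫ x, x ∂ν)
          + 6 * (∫ x, x ^ 2 ∂P) * (∫ x, x ^ 2 ∂ν)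
          + 4 * (∫ x, x ∂P) * (∫ x, x ^ 3 ∂ν) + ∫ x, x ^ 4 ∂ν := by
  have hP1 : Integrable (fun x : ℝ => x) P := by
    simpa using integrable_pow_of_four hP (k := 1) (by norm_num)
  have hν1 : Integrable (fun x : ℝ => x) ν := by
    simpa using integrable_pow_of_four hν (k := 1) (by norm_num)
  have hP2 : Integrable (fun x : ℝ => x ^ 2) P := integrable_pow_of_four hP (by norm_num)
  have hν2 : Integrable (fun x : ℝ => x ^ 2) ν := integrable_pow_of_four hν (by norm_num)
  have hP3 : Integrable (fun x : ℝ => x ^ 3) P := integrable_pow_of_four hP (by norm_num)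
  have hν3 : Integrable (fun x : ℝ => x ^ 3) ν := integrable_pow_of_four hν (by norm_num)
  have e : (fun p : ℝ × ℝ => (p.1 + p.2) ^ 4) =
      (fun p : ℝ × ℝ => p.1 ^ 4 * 1 + (4 * p.1 ^ 3) * p.2 + (6 * p.1 ^ 2) * p.2 ^ 2
        + (4 * p.1) * p.2 ^ 3 + 1 * p.2 ^ 4) := by funext p; ring
  have i1 : Integrable (fun p : ℝ × ℝ => p.1 ^ 4 * 1) (P.prod ν) :=
    hP.mul_prod (integrable_const 1)
  have i2 : Integrable (fun p : ℝ × ℝ => (4 * p.1 ^ 3) * p.2) (P.prod ν) :=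
    (hP3.const_mul 4).mul_prod hν1
  have i3 : Integrable (fun p : ℝ × ℝ => (6 * p.1 ^ 2) * p.2 ^ 2) (P.prod ν) :=
    (hP2.const_mul 6).mul_prod hν2
  have i4 : Integrable (fun p : ℝ × ℝ => (4 * p.1) * p.2 ^ 3) (P.prod ν) :=
    (hP1.const_mul 4).mul_prod hν3
  have i5 : Integrable (fun p : ℝ × ℝ => 1 * p.2 ^ 4) (P.prod ν) :=
    (integrable_const 1).mul_prod hν
  have A1 : ∫ p : ℝ × ℝ, p.1 ^ 4 * 1 ∂(P.prod ν) = (∫ x, x ^ 4 ∂P) * ∫ _x : ℝ, (1:ℝ) ∂ν :=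
    integral_prod_mul (fun x : ℝ => x ^ 4) (fun _ : ℝ => (1:ℝ))
  have A2 : ∫ p : ℝ × ℝ, (4 * p.1 ^ 3) * p.2 ∂(P.prod ν) =
      (∫ x : ℝ, 4 * x ^ 3 ∂P) * ∫ x, x ∂ν := integral_prod_mul (fun x : ℝ => 4 * x ^ 3) (fun x : ℝ => x)
  have A3 : ∫ p : ℝ × ℝ, (6 * p.1 ^ 2) * p.2 ^ 2 ∂(P.prod ν) =
      (∫ x : ℝ, 6 * x ^ 2 ∂P) * ∫ x, x ^ 2 ∂ν := integral_prod_mul (fun x : ℝ => 6 * x ^ 2) (fun x : ℝ => x ^ 2)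
  have A4 : ∫ p : ℝ × ℝ, (4 * p.1) * p.2 ^ 3 ∂(P.prod ν) =
      (∫ x : ℝ, 4 * x ∂P) * ∫ x, x ^ 3 ∂ν := integral_prod_mul (fun x : ℝ => 4 * x) (fun x : ℝ => x ^ 3)
  have A5 : ∫ p : ℝ × ℝ, 1 * p.2 ^ 4 ∂(P.prod ν) = (∫ _x : ℝ, (1:ℝ) ∂P) * ∫ x, x ^ 4 ∂ν :=
    integral_prod_mul (fun _ : ℝ => (1:ℝ)) (fun x : ℝ => x ^ 4)
  have S4 : ∫ p : ℝ × ℝ, (p.1 ^ 4 * 1 + (4 * p.1 ^ 3) * p.2 + (6 * p.1 ^ 2) * p.2 ^ 2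
        + (4 * p.1) * p.2 ^ 3 + 1 * p.2 ^ 4) ∂(P.prod ν) =
      (∫ p : ℝ × ℝ, (p.1 ^ 4 * 1 + (4 * p.1 ^ 3) * p.2 + (6 * p.1 ^ 2) * p.2 ^ 2
        + (4 * p.1) * p.2 ^ 3) ∂(P.prod ν)) + ∫ p : ℝ × ℝ, 1 * p.2 ^ 4 ∂(P.prod ν) :=
    integral_add (((i1.add i2).add i3).add i4) i5
  have S3 : ∫ p : ℝ × ℝ, (p.1 ^ 4 * 1 + (4 * p.1 ^ 3) * p.2 + (6 * p.1 ^ 2) * p.2 ^ 2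
        + (4 * p.1) * p.2 ^ 3) ∂(P.prod ν) =
      (∫ p : ℝ × ℝ, (p.1 ^ 4 * 1 + (4 * p.1 ^ 3) * p.2 + (6 * p.1 ^ 2) * p.2 ^ 2) ∂(P.prod ν))
        + ∫ p : ℝ × ℝ, (4 * p.1) * p.2 ^ 3 ∂(P.prod ν) :=
    integral_add ((i1.add i2).add i3) i4
  have S2 : ∫ p : ℝ × ℝ, (p.1 ^ 4 * 1 + (4 * p.1 ^ 3) * p.2 + (6 * p.1 ^ 2) * p.2 ^ 2)
        ∂(P.prod ν) =
      (∫ p : ℝ × ℝ, (p.1 ^ 4 * 1 + (4 * p.1 ^ 3) * p.2) ∂(P.prod ν))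
        + ∫ p : ℝ × ℝ, (6 * p.1 ^ 2) * p.2 ^ 2 ∂(P.prod ν) :=
    integral_add (i1.add i2) i3
  have S1 : ∫ p : ℝ × ℝ, (p.1 ^ 4 * 1 + (4 * p.1 ^ 3) * p.2) ∂(P.prod ν) =
      (∫ p : ℝ × ℝ, p.1 ^ 4 * 1 ∂(P.prod ν)) + ∫ p : ℝ × ℝ, (4 * p.1 ^ 3) * p.2 ∂(P.prod ν) :=
    integral_add i1 i2
  constructor
  · rw [_root_.integrable_conv_iff (by fun_prop)]
    exact e ▸ ((((i1.add i2).add i3).add i4).add i5)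
  · rw [_root_.integral_conv (by fun_prop), show (fun p : ℝ × ℝ => (p.1 + p.2) ^ 4) = _ from e,
      S4, S3, S2, S1, A1, A2, A3, A4, A5, integral_const_mul, integral_const_mul,
      integral_const_mul]
    simp

end convmom

section npow
variable {ν : Measure ℝ} [IsProbabilityMeasure ν]

/-- First-moment additivity along convolution powers. -/
lemma convNPow_m1 (hν : Integrable (fun x => x ^ 4) ν) (n : ℕ) :
    Integrable (fun x : ℝ => x ^ 4) (convNPow ν n) ∧
      ∫ x, x ∂(convNPow ν n) = n * ∫ x, x ∂ν := by
  induction n with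
  | zero =>
      refine ⟨integrable_dirac0 (by fun_prop), ?_⟩
      rw [show convNPow ν 0 = Measure.dirac 0 from rfl, integral_dirac]
      simp
  | succ n ih =>
      obtain ⟨ih4, ih1⟩ := ih
      have h4 := (conv_m4 ih4 hν).1
      have h1 := (conv_m1 ih4 hν).2
      refine ⟨h4, ?_⟩
      rw [show convNPow ν (n+1) = (convNPow ν n).conv ν from rfl, h1, ih1]
      push_cast
      ring

/-- Second and fourth moments of convolution powers of a centered measure. -/
lemma convNPow_m24 (hν : Integrable (fun x => x ^ 4) ν) (ha : ∫ x, x ∂ν = 0) (n : ℕ) :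
    (∫ x, x ^ 2 ∂(convNPow ν n) = n * ∫ x, x ^ 2 ∂ν) ∧
      ∫ x, x ^ 4 ∂(convNPow ν n) =
        n * (∫ x, x ^ 4 ∂ν) + 3 * n * (n - 1) * (∫ x, x ^ 2 ∂ν) ^ 2 := by
  induction n with
  | zero =>
      constructor <;>
      · rw [show convNPow ν 0 = Measure.dirac 0 from rfl, integral_dirac]
        simp
  | succ n ih =>
      obtain ⟨ih2, ih4⟩ := ih
      have hP4 := (convNPow_m1 hν n).1
      have hP1 : ∫ x, x ∂(convNPow ν n) = 0 := by
        rw [(convNPow_m1 hν n).2, ha]; ring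
      have h2 := (conv_m2 hP4 hν).2
      have h4 := (conv_m4 hP4 hν).2
      constructor
      · rw [show convNPow ν (n+1) = (convNPow ν n).conv ν from rfl, h2, ih2, hP1, ha]
        push_cast; ring
      · rw [show convNPow ν (n+1) = (convNPow ν n).conv ν from rfl, h4, ih2, ih4, hP1, ha]
        push_cast; ring

end npow

section transfer
variable {P ν : Measure ℝ} [IsProbabilityMeasure P] [IsProbabilityMeasure ν]

lemma integrable_pow4_right_of_conv (h : Integrable (fun x => x ^ 4) (P.conv ν)) :
    Integrable (fun x : ℝ => x ^ 4) ν := by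
  rw [_root_.integrable_conv_iff (by fun_prop)] at h
  have h' := h.prod_right_ae
  have hne : (MeasureTheory.ae P).NeBot := by
    refine MeasureTheory.ae_neBot.mpr ?_
    exact IsProbabilityMeasure.ne_zero P
  obtain ⟨x₀, hx₀⟩ := h'.exists
  refine ((hx₀.add (integrable_const (x₀ ^ 4))).const_mul 8).mono (by fun_prop)
    (ae_of_all _ fun y => ?_)
  have h1 : (0:ℝ) ≤ (x₀ + y) ^ 4 + x₀ ^ 4 := by positivity
  have h2 : ‖y ^ 4‖ = y ^ 4 := by rw [Real.norm_eq_abs, abs_of_nonneg (by positivity)]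
  have h3 : ‖8 * ((x₀ + y) ^ 4 + x₀ ^ 4)‖ = 8 * ((x₀ + y) ^ 4 + x₀ ^ 4) := by
    rw [Real.norm_eq_abs, abs_of_nonneg (by positivity)]
  show ‖y ^ 4‖ ≤ ‖8 * ((x₀ + y) ^ 4 + x₀ ^ 4)‖
  rw [h2, h3]
  nlinarith [sq_nonneg ((x₀ + y) + x₀), sq_nonneg ((x₀ + y) - x₀),
    sq_nonneg ((x₀ + y) ^ 2 - x₀ ^ 2), sq_nonneg ((x₀ + y) ^ 2 + x₀ ^ 2),
    sq_nonneg ((x₀ + y) * x₀)]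

end transfer

section cs
variable {ν : Measure ℝ} [IsProbabilityMeasure ν]

lemma fourth_moment_pos (h4 : Integrable (fun x => x ^ 4) ν)
    (hb : 0 < ∫ x, x ^ 2 ∂ν) : 0 < ∫ x, x ^ 4 ∂ν := by
  rcases lt_or_ge 0 (∫ x, x ^ 4 ∂ν) with h | h
  · exact h
  · exfalso
    have h0 : ∫ x, x ^ 4 ∂ν = 0 :=
      le_antisymm h (integral_nonneg fun x => by positivity)
    have hae : (fun x : ℝ => x ^ 4) =ᵐ[ν] 0 :=
      (integral_eq_zero_iff_of_nonneg (fun x => by positivity) h4).mp h0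
    have hb0 : ∫ x, x ^ 2 ∂ν = 0 := by
      rw [show (0:ℝ) = ∫ x : ℝ, (0:ℝ) ∂ν by simp]
      refine integral_congr_ae ?_
      filter_upwards [hae] with x hx
      have hx' : x ^ 4 = 0 := by simpa using hx
      have : x = 0 := by
        exact pow_eq_zero_iff (by norm_num) |>.mp hx'
      simp [this]
    linarith

lemma abs_cube_moment_pos (h3 : Integrable (fun x : ℝ => |x| ^ 3) ν)
    (hb : 0 < ∫ x, x ^ 2 ∂ν) : 0 < ∫ x, |x| ^ 3 ∂ν := by
  rcases lt_or_ge 0 (∫ x, |x| ^ 3 ∂ν) with h | h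
  · exact h
  · exfalso
    have h0 : ∫ x, |x| ^ 3 ∂ν = 0 :=
      le_antisymm h (integral_nonneg fun x => by positivity)
    have hae : (fun x : ℝ => |x| ^ 3) =ᵐ[ν] 0 :=
      (integral_eq_zero_iff_of_nonneg (fun x => by positivity) h3).mp h0
    have hb0 : ∫ x, x ^ 2 ∂ν = 0 := by
      rw [show (0:ℝ) = ∫ x : ℝ, (0:ℝ) ∂ν by simp]
      refine integral_congr_ae ?_
      filter_upwards [hae] with x hx
      simp only [Pi.zero_apply] at hx
      have hx0 : |x| = 0 := pow_eq_zero_iff (by norm_num : (3:ℕ) ≠ 0) |>.mp hx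
      have : x = 0 := abs_eq_zero.mp hx0
      simp [this]
    linarith

lemma integral_abs_cube_le (h4 : Integrable (fun x => x ^ 4) ν)
    (hb : 0 < ∫ x, x ^ 2 ∂ν) :
    ∫ x, |x| ^ 3 ∂ν ≤ Real.sqrt ((∫ x, x ^ 2 ∂ν) * ∫ x, x ^ 4 ∂ν) := by
  set b := ∫ x, x ^ 2 ∂ν with hbdef
  set c := ∫ x, x ^ 4 ∂ν with hcdef
  have hc : 0 < c := fourth_moment_pos h4 hb
  set t : ℝ := Real.sqrt c / Real.sqrt b with htdef
  have ht : 0 < t := by positivity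
  have h2 : Integrable (fun x : ℝ => x ^ 2) ν := integrable_pow_of_four h4 (by norm_num)
  have h3 : Integrable (fun x : ℝ => |x| ^ 3) ν := integrable_abs_pow h4 (by norm_num)
  have hpt : ∀ x : ℝ, |x| ^ 3 ≤ (t * x ^ 2 + x ^ 4 / t) / 2 := by
    intro x
    set u : ℝ := |x| with hu
    have h2x : x ^ 2 = u ^ 2 := (sq_abs x).symm
    have h4x : x ^ 4 = u ^ 4 := by rw [show x ^ 4 = (x ^ 2) ^ 2 by ring, h2x]; ring
    rw [h2x, h4x]
    have he : (t * u ^ 2 + u ^ 4 / t) / 2 - u ^ 3 = (t * u - u ^ 2) ^ 2 / (2 * t) := by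
      field_simp; ring
    have hnn : 0 ≤ (t * u - u ^ 2) ^ 2 / (2 * t) := by positivity
    linarith
  have hint : ∫ x, |x| ^ 3 ∂ν ≤ ∫ x, (t * x ^ 2 + x ^ 4 / t) / 2 ∂ν := by
    refine integral_mono h3 ?_ hpt
    exact (((h2.const_mul t).add (h4.div_const t)).div_const 2)
  have hval : ∫ x, (t * x ^ 2 + x ^ 4 / t) / 2 ∂ν = (t * b + c / t) / 2 := by
    rw [integral_div, integral_add (h2.const_mul t) (h4.div_const t),
      integral_const_mul, integral_div]
  have hfin : (t * b + c / t) / 2 = Real.sqrt (b * c) := by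
    rw [htdef]
    rw [Real.sqrt_mul (le_of_lt hb)]
    have hsb : Real.sqrt b > 0 := Real.sqrt_pos.mpr hb
    have hsc : Real.sqrt c > 0 := Real.sqrt_pos.mpr hc
    have hb' : Real.sqrt b ^ 2 = b := Real.sq_sqrt hb.le
    have hc' : Real.sqrt c ^ 2 = c := Real.sq_sqrt hc.le
    field_simp
    nlinarith [hb', hc', hsb, hsc]
  calc ∫ x, |x| ^ 3 ∂ν ≤ ∫ x, (t * x ^ 2 + x ^ 4 / t) / 2 ∂ν := hint
    _ = Real.sqrt (b * c) := hval.trans hfin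


/-- Kolmogorov (sup) distance between two measures on `ℝ`,
via their distribution functions. -/
noncomputable def kolDist (μ ν : Measure ℝ) : ℝ :=
  ⨆ x : ℝ, |cdf μ x - cdf ν x|

/-- Quantitative fourth moment theorem for infinitely divisible laws. -/
theorem kolmogorov_bound_infinitely_divisible
    (C : ℝ)
    -- the Berry–Esseen theorem with constant `C`:
    (hBE : ∀ (ρ : Measure ℝ), IsProbabilityMeasure ρ → ∀ n : ℕ, 0 < n →
      (∫ x, x ∂ρ = 0) → 0 < ∫ x, x ^ 2 ∂ρ →
      Integrable (fun x => |x| ^ 3) ρ →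
      kolDist
        (Measure.map
          (fun x => x / (Real.sqrt (∫ x, x ^ 2 ∂ρ) * Real.sqrt n))
          (convNPow ρ n))
        (gaussianReal 0 1) ≤
        C * (∫ x, |x| ^ 3 ∂ρ) /
          (Real.sqrt (∫ x, x ^ 2 ∂ρ) ^ 3 * Real.sqrt n))
    (μ : Measure ℝ) [IsProbabilityMeasure μ]
    (hID : ∀ n : ℕ, 0 < n → ∃ ν : Measure ℝ,
      IsProbabilityMeasure ν ∧ μ = convNPow ν n)
    (hmean : ∫ x, x ∂μ = 0) (hvar : ∫ x, x ^ 2 ∂μ = 1)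
    (h4 : Integrable (fun x => x ^ 4) μ) :
    kolDist μ (gaussianReal 0 1) ≤
      C * Real.sqrt ((∫ x, x ^ 4 ∂μ) - 3) := by
  have hkd : 0 ≤ kolDist μ (gaussianReal 0 1) := Real.iSup_nonneg fun x => abs_nonneg _
  set m₄ := ∫ x, x ^ 4 ∂μ with hm₄
  have key : ∀ n : ℕ, 0 < n →
      kolDist μ (gaussianReal 0 1) ≤ C * Real.sqrt (m₄ - 3 + 3 / (n : ℝ)) := by
    intro n hn
    obtain ⟨ν, hνP, hμ⟩ := hID n hn
    haveI := hνP
    obtain ⟨m, rfl⟩ : ∃ m, n = m + 1 := ⟨n - 1, (Nat.succ_pred_eq_of_pos hn).symm⟩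
    have hμ' : μ = (convNPow ν m).conv ν := hμ
    have hν4 : Integrable (fun x => x ^ 4) ν :=
      integrable_pow4_right_of_conv (hμ' ▸ h4)
    have ha : ∫ x, x ∂ν = 0 := by
      have h1 := (convNPow_m1 hν4 (m + 1)).2
      rw [← hμ, hmean] at h1
      rcases mul_eq_zero.mp h1.symm with h | h
      · exact absurd h (by positivity)
      · exact h
    obtain ⟨h2f, h4f⟩ := convNPow_m24 hν4 ha (m + 1)
    rw [← hμ, hvar] at h2f
    rw [← hμ, ← hm₄] at h4f
    have hnR0 : (0:ℝ) < ((m + 1 : ℕ) : ℝ) := by positivity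
    have hb : ∫ x, x ^ 2 ∂ν = 1 / ((m + 1 : ℕ) : ℝ) := by
      rw [eq_div_iff hnR0.ne']
      linear_combination -h2f
    have hbpos : 0 < ∫ x, x ^ 2 ∂ν := by rw [hb]; positivity
    have habs3 : Integrable (fun x : ℝ => |x| ^ 3) ν := integrable_abs_pow hν4 (by norm_num)
    have hcpos : 0 < ∫ x, x ^ 4 ∂ν := fourth_moment_pos hν4 hbpos
    have hBE' := hBE ν hνP (m + 1) hn ha hbpos habs3
    have hs : Real.sqrt (∫ x, x ^ 2 ∂ν) * Real.sqrt ((m + 1 : ℕ) : ℝ) = 1 := by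
      rw [hb, ← Real.sqrt_mul (by positivity), one_div, inv_mul_cancel₀ hnR0.ne',
        Real.sqrt_one]
    rw [show (fun x => x / (Real.sqrt (∫ x, x ^ 2 ∂ν) * Real.sqrt ((m + 1 : ℕ) : ℝ)))
        = fun x : ℝ => x from by funext x; rw [hs, div_one]] at hBE'
    rw [Measure.map_id', ← hμ] at hBE'
    have hsq : Real.sqrt ((m + 1 : ℕ) : ℝ) ^ 2 = ((m + 1 : ℕ) : ℝ) := Real.sq_sqrt hnR0.le
    have hsp : 0 < Real.sqrt ((m + 1 : ℕ) : ℝ) := Real.sqrt_pos.mpr hnR0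
    have hD : Real.sqrt (∫ x, x ^ 2 ∂ν) ^ 3 * Real.sqrt ((m + 1 : ℕ) : ℝ)
        = 1 / ((m + 1 : ℕ) : ℝ) := by
      rw [hb, one_div, Real.sqrt_inv, inv_pow,
        show Real.sqrt ((m + 1 : ℕ) : ℝ) ^ 3
            = ((m + 1 : ℕ) : ℝ) * Real.sqrt ((m + 1 : ℕ) : ℝ) from by
          rw [pow_succ, hsq],
        mul_inv, mul_assoc, inv_mul_cancel₀ hsp.ne', mul_one]
    rw [hD] at hBE'
    have hT := integral_abs_cube_le hν4 hbpos
    have hTpos := abs_cube_moment_pos habs3 hbpos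
    -- make the cast opaque
    revert hBE' hb h4f hnR0
    generalize ((m + 1 : ℕ) : ℝ) = nR
    intro h4f hnR0 hb hBE'
    set b := ∫ x, x ^ 2 ∂ν with hbdef
    set c := ∫ x, x ^ 4 ∂ν with hcdef
    rcases le_or_gt 0 C with hC | hC
    · have hstep1 : C * (∫ x, |x| ^ 3 ∂ν) / (1 / nR) = C * (∫ x, |x| ^ 3 ∂ν) * nR := by
        field_simp
      have hstep2 : C * (∫ x, |x| ^ 3 ∂ν) * nR ≤ C * Real.sqrt (b * c) * nR := by
        have := mul_le_mul_of_nonneg_left hT hC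
        exact mul_le_mul_of_nonneg_right this hnR0.le
      have hbc : m₄ - 3 + 3 / nR = (b * c) * nR ^ 2 := by
        rw [hb] at h4f ⊢
        field_simp at h4f ⊢
        have h5 : nR * (m₄ * nR) = nR * (c * nR ^ 2 + 3 * nR - 3) := by
          linear_combination nR * h4f
        have h6 : m₄ * nR = c * nR ^ 2 + 3 * nR - 3 := mul_left_cancel₀ hnR0.ne' h5
        linear_combination h6
      have hstep3 : Real.sqrt (b * c) * nR = Real.sqrt (m₄ - 3 + 3 / nR) := by
        rw [hbc, Real.sqrt_mul (by positivity : (0:ℝ) ≤ b * c) (nR ^ 2), Real.sqrt_sq hnR0.le]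
      calc kolDist μ (gaussianReal 0 1)
          ≤ C * (∫ x, |x| ^ 3 ∂ν) / (1 / nR) := hBE'
        _ = C * (∫ x, |x| ^ 3 ∂ν) * nR := hstep1
        _ ≤ C * Real.sqrt (b * c) * nR := hstep2
        _ = C * (Real.sqrt (b * c) * nR) := by ring
        _ = C * Real.sqrt (m₄ - 3 + 3 / nR) := by rw [hstep3]
    · exfalso
      have hneg : C * (∫ x, |x| ^ 3 ∂ν) / (1 / nR) < 0 := by
        apply div_neg_of_neg_of_pos
        · exact mul_neg_of_neg_of_pos hC hTpos
        · positivity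
      linarith
  have ht : Filter.Tendsto (fun n : ℕ => C * Real.sqrt (m₄ - 3 + 3 / (n : ℝ)))
      Filter.atTop (nhds (C * Real.sqrt (m₄ - 3))) := by
    have h0 : Filter.Tendsto (fun n : ℕ => m₄ - 3 + 3 / (n : ℝ)) Filter.atTop
        (nhds (m₄ - 3 + 0)) :=
      Filter.Tendsto.add tendsto_const_nhds (tendsto_const_div_atTop_nhds_zero_nat 3)
    rw [add_zero] at h0
    exact h0.sqrt.const_mul C
  exact ge_of_tendsto ht (Filter.eventually_atTop.mpr ⟨1, fun n hn => key n hn⟩)
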